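/- Let A be a self-adjoint operator on an infinite-dimensional separable Hilbert space with compact resolvent and eigenvalues λₙ → +∞, and let β ∈ (1/2, 1). Then the lower square function estimate ‖x‖² ≤ K² ∫₀^∞ ‖(tA)^{−β}(T(2t^{2β}) − T(t^{2β}))x‖² dt/t, where T(t) = e^{−tA}, fails for every constant K > 0. More precisely, applying the right-hand side to a normalized eigenvector φₙ of eigenvalue λₙ gives the value c(β) λₙ^{1−2β} with c(β) = (1/(2β)) ∫₀^∞ (e^{−2s} − e^{−s})² ds/s², which tends to 0 as n → ∞. -/

import Mathlib

open MeasureTheory Filter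

private lemma ptwise9 (t l b : ℝ) (ht : 0 < t) (hl : 0 < l) (hb : 0 < b) (E : ℝ) :
    (E * (t*l) ^ (-b)) ^ 2 / t
      = ((2*b) * t ^ (2*b - 1)) • (E ^ 2 / (t ^ (2*b)) ^ 2 * (l ^ (-(2*b)) / (2*b))) := by
  have htl : (0:ℝ) < t * l := mul_pos ht hl
  have e1 : ((t*l) ^ (-b)) ^ 2 = (t*l) ^ (-(2*b)) := by
    rw [← Real.rpow_natCast ((t*l) ^ (-b)) 2, ← Real.rpow_mul htl.le]
    norm_num; ring_nf
  have e3 : (t ^ (2*b)) ^ 2 = t ^ (2*(2*b)) := by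
    rw [← Real.rpow_natCast (t ^ (2*b)) 2, ← Real.rpow_mul ht.le]
    norm_num; ring_nf
  have e2 : t ^ (-(2*b)) * t⁻¹ = t ^ (-(2*b) - 1) := by
    rw [← Real.rpow_neg_one t, ← Real.rpow_add ht, show -(2*b) + -1 = -(2*b) - 1 by ring]
  have e4 : t ^ (2*b-1) * (t ^ (2*(2*b)))⁻¹ = t ^ (-(2*b) - 1) := by
    rw [← Real.rpow_neg ht.le, ← Real.rpow_add ht, show 2*b-1 + -(2*(2*b)) = -(2*b) - 1 by ring]
  rw [smul_eq_mul]
  calc (E * (t*l) ^ (-b)) ^ 2 / t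
      = E^2 * l ^ (-(2*b)) * (t ^ (-(2*b)) * t⁻¹) := by
        rw [mul_pow, e1, Real.mul_rpow ht.le hl.le, div_eq_mul_inv]; ring
    _ = E^2 * l ^ (-(2*b)) * t ^ (-(2*b) - 1) := by rw [e2]
    _ = E^2 * l ^ (-(2*b)) * (t ^ (2*b-1) * (t ^ (2*(2*b)))⁻¹) := by rw [e4]
    _ = (2*b) * t ^ (2*b - 1) * (E ^ 2 / (t ^ (2*b)) ^ 2 * (l ^ (-(2*b)) / (2*b))) := by
        rw [e3]; field_simp

/-- For a nonnegative self-adjoint operator with compact resolvent (given here through an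
orthonormal system of eigenvectors `φ n` with eigenvalues `lam n → ∞`), the heat semigroup
`T(s) = e^{-sA}` and the fractional powers `(tA)^{-β}` act diagonally; for `β ∈ (1/2, 1)`
the lower square function estimate fails for every `K > 0`: testing on `φ n` produces the
value `c(β) λₙ^{1-2β} → 0`. -/
theorem stmt9 {H : Type*} [NormedAddCommGroup H] [InnerProductSpace ℂ H] [CompleteSpace H]
    (φ : ℕ → H) (lam : ℕ → ℝ)
    (hortho : Orthonormal ℂ φ)
    (hlam0 : ∀ n, 0 ≤ lam n)
    (hlam : Tendsto lam atTop atTop)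
    (β : ℝ) (hβ : 1 / 2 < β) (hβ1 : β < 1)
    (T : ℝ → H →L[ℂ] H) (Bt : ℝ → H →L[ℂ] H)
    (hT : ∀ s : ℝ, 0 ≤ s → ∀ n, T s (φ n) = ((Real.exp (-(s * lam n)) : ℝ) : ℂ) • φ n)
    (hB : ∀ t : ℝ, 0 < t → ∀ n,
      Bt t (φ n) = (((t * lam n) ^ (-β) : ℝ) : ℂ) • φ n) :
    (∀ n, 0 < lam n →
      (∫ t in Set.Ioi (0:ℝ),
          ‖Bt t ((T (2 * t ^ (2 * β)) - T (t ^ (2 * β))) (φ n))‖ ^ 2 / t)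
        = (1 / (2 * β)) *
            (∫ s in Set.Ioi (0:ℝ), (Real.exp (-2 * s) - Real.exp (-s)) ^ 2 / s ^ 2) *
            lam n ^ (1 - 2 * β)) ∧
    Tendsto (fun n =>
        (1 / (2 * β)) *
            (∫ s in Set.Ioi (0:ℝ), (Real.exp (-2 * s) - Real.exp (-s)) ^ 2 / s ^ 2) *
            lam n ^ (1 - 2 * β)) atTop (nhds 0) ∧
    ∀ K : ℝ, 0 < K →
      ¬ (∀ x : H, ‖x‖ ^ 2 ≤ K ^ 2 * ∫ t in Set.Ioi (0:ℝ),
            ‖Bt t ((T (2 * t ^ (2 * β)) - T (t ^ (2 * β))) x)‖ ^ 2 / t) := by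
  have hb : (0:ℝ) < 2 * β := by linarith
  set c : ℝ := ∫ s in Set.Ioi (0:ℝ), (Real.exp (-2 * s) - Real.exp (-s)) ^ 2 / s ^ 2 with hc
  have key : ∀ n, 0 < lam n →
      (∫ t in Set.Ioi (0:ℝ),
          ‖Bt t ((T (2 * t ^ (2 * β)) - T (t ^ (2 * β))) (φ n))‖ ^ 2 / t)
        = (1 / (2 * β)) * c * lam n ^ (1 - 2 * β) := by
    intro n hn
    set l : ℝ := lam n with hldef
    set g2 : ℝ → ℝ := fun s =>
      l^2 * ((Real.exp (-2 * s) - Real.exp (-s)) ^ 2 / s ^ 2) with hg2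
    set g : ℝ → ℝ := fun u =>
      (Real.exp (-(2 * u * l)) - Real.exp (-(u * l))) ^ 2 / u ^ 2 * (l ^ (-(2*β)) / (2*β))
      with hg
    have hpt : Set.EqOn
        (fun t => ‖Bt t ((T (2 * t ^ (2 * β)) - T (t ^ (2 * β))) (φ n))‖ ^ 2 / t)
        (fun t => ((2*β) * t ^ (2*β - 1)) • g (t ^ (2*β))) (Set.Ioi 0) := by
      intro t ht
      have ht' : (0:ℝ) < t := ht
      have h2 : (0:ℝ) < t ^ (2*β) := Real.rpow_pos_of_pos ht' _
      simp only
      rw [ContinuousLinearMap.sub_apply, hT _ (by positivity) n, hT _ h2.le n, ← sub_smul,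
        ← Complex.ofReal_sub, _root_.map_smul, hB t ht' n, smul_smul, norm_smul, hortho.1 n, mul_one,
        ← Complex.ofReal_mul, Complex.norm_real, Real.norm_eq_abs, sq_abs]
      exact ptwise9 t l β ht' hn (by linarith) _
    calc (∫ t in Set.Ioi (0:ℝ),
            ‖Bt t ((T (2 * t ^ (2 * β)) - T (t ^ (2 * β))) (φ n))‖ ^ 2 / t)
        = ∫ t in Set.Ioi (0:ℝ), ((2*β) * t ^ (2*β - 1)) • g (t ^ (2*β)) :=
          setIntegral_congr_fun measurableSet_Ioi hpt
      _ = ∫ u in Set.Ioi (0:ℝ), g u := integral_comp_rpow_Ioi_of_pos hb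
      _ = (∫ u in Set.Ioi (0:ℝ),
            (Real.exp (-(2 * u * l)) - Real.exp (-(u * l))) ^ 2 / u ^ 2)
            * (l ^ (-(2*β)) / (2*β)) := integral_mul_const _ _
      _ = (∫ u in Set.Ioi (0:ℝ), g2 (l * u)) * (l ^ (-(2*β)) / (2*β)) := by
          congr 1
          refine setIntegral_congr_fun measurableSet_Ioi (fun u hu => ?_)
          have hu' : (0:ℝ) < u := hu
          rw [hg2]
          simp only
          rw [show -2 * (l * u) = -(2 * u * l) by ring, show -(l * u) = -(u * l) by ring]
          field_simp
      _ = (l⁻¹ • ∫ s in Set.Ioi (l * 0), g2 s) * (l ^ (-(2*β)) / (2*β)) := by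
          rw [integral_comp_mul_left_Ioi g2 0 hn]
      _ = l⁻¹ * (l^2 * c) * (l ^ (-(2*β)) / (2*β)) := by
          rw [mul_zero, hg2, integral_const_mul, smul_eq_mul, hc]
      _ = (1 / (2 * β)) * c * l ^ (1 - 2 * β) := by
          have epow : l⁻¹ * l^(2:ℕ) * l ^ (-(2*β)) = l ^ (1-2*β) := by
            rw [← Real.rpow_neg_one l, ← Real.rpow_natCast l 2, ← Real.rpow_add hn,
              ← Real.rpow_add hn]
            congr 1
            push_cast
            ring
          rw [← epow]; ring
  have tend : Tendsto (fun n => (1 / (2 * β)) * c * lam n ^ (1 - 2 * β)) atTop (nhds 0) := by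
    have h1 : Tendsto (fun x : ℝ => x ^ (1 - 2*β)) atTop (nhds 0) := by
      have := tendsto_rpow_neg_atTop (y := 2*β - 1) (by linarith)
      convert this using 2 with x
      rw [neg_sub]
    have h2 : Tendsto (fun n => (lam n) ^ (1 - 2*β)) atTop (nhds 0) := h1.comp hlam
    have := h2.const_mul ((1 / (2 * β)) * c)
    simpa [mul_assoc] using this
  refine ⟨key, tend, fun K hK hcontra => ?_⟩
  have hev1 : ∀ᶠ n in atTop, 0 < lam n := hlam.eventually_gt_atTop 0
  have hev2 : ∀ᶠ n in atTop,
      K ^ 2 * ((1 / (2 * β)) * c * lam n ^ (1 - 2 * β)) < 1 := by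
    have h2' : Tendsto (fun n => K ^ 2 * ((1 / (2 * β)) * c * lam n ^ (1 - 2 * β)))
        atTop (nhds (K ^ 2 * 0)) := tend.const_mul _
    exact h2'.eventually_lt_const (by norm_num)
  obtain ⟨n, hn1, hn2⟩ := (hev1.and hev2).exists
  have h := hcontra (φ n)
  rw [key n hn1, hortho.1 n, one_pow] at h
  linarith
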